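/- arXiv:1301.4359 — 2 statements merged into one kernel-verified Lean document; each statement's English description precedes it below -/
import Mathlib

section
/- For real b > 0, the series ∑_{n=0}^∞ ((1/2)_n / n!) · 1/(1 + n/b)^2 equals π^{1/2} b^2 Γ(b) (ψ(b + 1/2) − ψ(b)) / Γ(b + 1/2), where ψ is the digamma function. -/
open Real BigOperators
open MeasureTheory

noncomputable def poch (a : ℝ) (n : ℕ) : ℝ := ∏ i ∈ Finset.range n, (a + i)

noncomputable def digamma (x : ℝ) : ℝ := deriv Real.Gamma x / Real.Gamma x

noncomputable def cc (n : ℕ) : ℝ := poch (1/2) n / n.factorial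




lemma poch_succ (a : ℝ) (n : ℕ) : poch a (n+1) = poch a n * (a + n) := by
  simp [poch, Finset.prod_range_succ]

lemma cc_zero : cc 0 = 1 := by simp [cc, poch]

lemma cc_succ (n : ℕ) : cc (n+1) = cc n * ((n + 1/2) / (n + 1)) := by
  simp only [cc, poch_succ, Nat.factorial_succ]
  push_cast
  field_simp
  ring

lemma cc_pos (n : ℕ) : 0 < cc n := by
  induction n with
  | zero => simp [cc_zero]
  | succ n ih =>
    rw [cc_succ]
    positivity

lemma cc_le_one (n : ℕ) : cc n ≤ 1 := by
  induction n with
  | zero => simp [cc_zero]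
  | succ n ih =>
    rw [cc_succ]
    have h1 : ((n:ℝ) + 1/2) / (n + 1) ≤ 1 := by
      rw [div_le_one (by positivity)]; linarith
    calc cc n * ((n + 1/2) / (n + 1)) ≤ 1 * 1 := by
          apply mul_le_mul ih h1 (by positivity) one_pos.le
      _ = 1 := by ring

lemma cc_sq (n : ℕ) : cc n ^ 2 * (n + 1) ≤ 1 := by
  induction n with
  | zero => simp [cc_zero]
  | succ n ih =>
    rw [cc_succ]
    have h := cc_pos n
    have hn : (0:ℝ) < n + 1 := by positivity
    have key : ((n:ℝ) + 1/2)^2 * (n + 2) ≤ (n + 1)^3 := by nlinarith [sq_nonneg ((n:ℝ))]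
    have : (cc n * ((n + 1/2) / (n + 1)))^2 * ((n:ℕ) + 1 + 1 : ℝ)
        = cc n ^2 * (n+1) * (((n + 1/2)^2 * (n+2)) / (n+1)^3) := by
      field_simp; ring
    rw [show ((n+1:ℕ):ℝ) + 1 = (n:ℝ) + 1 + 1 by push_cast; ring, this]
    have h2 : (((n:ℝ) + 1/2)^2 * (n+2)) / (n+1)^3 ≤ 1 := by
      rw [div_le_one (by positivity)]; exact key
    calc cc n ^2 * (n+1) * (((n + 1/2)^2 * (n+2)) / (n+1)^3) ≤ 1 * 1 := by
          apply mul_le_mul ih h2 (by positivity) one_pos.le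
      _ = 1 := by ring

lemma cc_le (n : ℕ) : cc n ≤ 1 / Real.sqrt (n + 1) := by
  have h := cc_pos n
  have hs : (0:ℝ) < Real.sqrt (n+1) := Real.sqrt_pos.2 (by positivity)
  rw [le_div_iff₀ hs]
  have : (cc n * Real.sqrt (n+1))^2 ≤ 1 := by
    rw [mul_pow, Real.sq_sqrt (by positivity : (0:ℝ) ≤ (n:ℝ)+1)]
    exact cc_sq n
  nlinarith [mul_pos h hs]

lemma summable_P {x : ℝ} (hx : |x| < 1) : Summable (fun n => cc n * x ^ n) := by
  apply Summable.of_norm_bounded (summable_geometric_of_lt_one (abs_nonneg x) hx)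
  intro n
  rw [norm_mul, norm_pow]
  calc ‖cc n‖ * ‖x‖ ^ n ≤ 1 * |x| ^ n := by
        apply mul_le_mul _ le_rfl (by positivity) one_pos.le
        rw [Real.norm_eq_abs, abs_of_pos (cc_pos n)]; exact cc_le_one n
    _ = |x| ^ n := one_mul _

lemma summable_Q {x : ℝ} (hx : |x| < 1) : Summable (fun n => cc n * ((n:ℝ) * x ^ n)) := by
  have hx' : ‖|x|‖ < 1 := by rwa [Real.norm_eq_abs, abs_abs]
  apply Summable.of_norm_bounded (g := fun n : ℕ => (n:ℝ)^1 * |x| ^ n)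
    (summable_pow_mul_geometric_of_norm_lt_one 1 hx')
  intro n
  rw [norm_mul, norm_mul, norm_pow]
  have h1 : ‖cc n‖ ≤ 1 := by rw [Real.norm_eq_abs, abs_of_pos (cc_pos n)]; exact cc_le_one n
  calc ‖cc n‖ * (‖(n:ℝ)‖ * ‖x‖ ^ n) ≤ 1 * (‖(n:ℝ)‖ * ‖x‖ ^ n) := by
        apply mul_le_mul h1 le_rfl (by positivity) one_pos.le
    _ = (n:ℝ)^1 * |x| ^ n := by rw [one_mul, Real.norm_natCast, Real.norm_eq_abs]; ring

noncomputable def PP (x : ℝ) : ℝ := ∑' n, cc n * x ^ n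

lemma hasDerivAt_PP {r x : ℝ} (hr : 0 < r) (hr1 : r < 1) (hx : |x| < r) :
    HasDerivAt PP ((1/2) * PP x / (1 - x)) x := by
  have hx1 : |x| < 1 := hx.trans hr1
  have hxlt : x < 1 := (abs_lt.1 hx1).2
  have h1x : (0:ℝ) < 1 - x := by linarith
  -- the series of derivatives
  have key : HasDerivAt PP (∑' n, cc n * ((n:ℝ) * x ^ (n-1))) x := by
    apply hasDerivAt_tsum_of_isPreconnected
      (u := fun n : ℕ => (1/r) * ((n:ℝ)^1 * r ^ n))
      (g' := fun (n : ℕ) (y : ℝ) => cc n * ((n:ℝ) * y ^ (n-1)))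
      (t := Metric.ball (0:ℝ) r) (y₀ := 0)
    · apply Summable.mul_left
      exact summable_pow_mul_geometric_of_norm_lt_one 1 (by rwa [Real.norm_eq_abs, abs_of_pos hr])
    · exact Metric.isOpen_ball
    · exact (convex_ball (0:ℝ) r).isPreconnected
    · intro n y _
      exact (hasDerivAt_pow n y).const_mul (cc n)
    · intro n y hy
      rw [Metric.mem_ball, Real.dist_eq, sub_zero] at hy
      rw [Real.norm_eq_abs, abs_mul, abs_mul, abs_of_pos (cc_pos n), Nat.abs_cast, abs_pow]
      rcases Nat.eq_zero_or_pos n with h0 | h0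
      · simp [h0]
      calc cc n * ((n:ℝ) * |y| ^ (n-1)) ≤ 1 * ((n:ℝ) * r ^ (n-1)) := by
            apply mul_le_mul (cc_le_one n) _ (by positivity) one_pos.le
            apply mul_le_mul le_rfl (pow_le_pow_left₀ (abs_nonneg y) hy.le _) (by positivity)
              (by positivity)
        _ = (1/r) * ((n:ℝ)^1 * r ^ n) := by
            rw [one_mul, pow_one]
            rw [show n = (n-1) + 1 from (Nat.succ_pred_eq_of_pos h0).symm]
            rw [Nat.add_sub_cancel]
            field_simp
            ring
    · exact Metric.mem_ball_self hr
    · exact summable_P (by rw [abs_zero]; exact one_pos)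
    · rwa [Metric.mem_ball, Real.dist_eq, sub_zero]
  -- now identify the derivative sum
  have hQ := summable_Q hx1
  have hP := summable_P hx1
  have hD : Summable (fun n => cc n * ((n:ℝ) * x ^ (n-1))) := by
    apply Summable.of_norm_bounded (g := fun n : ℕ => (1/r) * ((n:ℝ)^1 * r ^ n))
      (Summable.mul_left _ (summable_pow_mul_geometric_of_norm_lt_one 1
        (by rwa [Real.norm_eq_abs, abs_of_pos hr])))
    intro n
    rw [Real.norm_eq_abs, abs_mul, abs_mul, abs_of_pos (cc_pos n), Nat.abs_cast, abs_pow]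
    rcases Nat.eq_zero_or_pos n with h0 | h0
    · simp [h0]
      try positivity
    calc cc n * ((n:ℝ) * |x| ^ (n-1)) ≤ 1 * ((n:ℝ) * r ^ (n-1)) := by
          apply mul_le_mul (cc_le_one n) _ (by positivity) one_pos.le
          apply mul_le_mul le_rfl (pow_le_pow_left₀ (abs_nonneg x) hx.le _) (by positivity)
            (by positivity)
      _ = (1/r) * ((n:ℝ)^1 * r ^ n) := by
          rw [show n = (n-1) + 1 from (Nat.succ_pred_eq_of_pos h0).symm]
          rw [Nat.add_sub_cancel]
          field_simp
          ring
  have hQ' : Summable (fun n => (1/2) * (cc n * x ^ n)) := hP.mul_left _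
  -- shift identity
  have hDval : (∑' n, cc n * ((n:ℝ) * x ^ (n-1)))
      = (∑' n, cc n * ((n:ℝ) * x ^ n)) + ∑' n, (1/2) * (cc n * x ^ n) := by
    rw [hD.tsum_eq_zero_add]
    have e0 : cc 0 * (((0:ℕ):ℝ) * x ^ (0-1)) = 0 := by norm_num
    rw [e0, zero_add]
    rw [← hQ.tsum_add hQ']
    apply tsum_congr
    intro n
    have hcc : cc (n+1) * ((n:ℝ)+1) = cc n * ((n:ℝ) + 1/2) := by
      rw [cc_succ]
      have : ((n:ℝ) + 1) ≠ 0 := by positivity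
      field_simp
    have : cc (n+1) * (((n+1:ℕ):ℝ) * x ^ (n+1-1)) = (cc (n+1) * ((n:ℝ)+1)) * x ^ n := by
      push_cast
      ring_nf
    rw [this, hcc]
    ring
  have hxD : x * (∑' n, cc n * ((n:ℝ) * x ^ (n-1))) = ∑' n, cc n * ((n:ℝ) * x ^ n) := by
    rw [← tsum_mul_left]
    apply tsum_congr
    intro n
    rcases Nat.eq_zero_or_pos n with h0 | h0
    · simp [h0]
    rw [show n = (n-1) + 1 from (Nat.succ_pred_eq_of_pos h0).symm, Nat.add_sub_cancel]
    push_cast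
    ring
  have hsum : (∑' n, (1/2) * (cc n * x ^ n)) = (1/2) * PP x := by
    rw [tsum_mul_left]; rfl
  have hfinal : (∑' n, cc n * ((n:ℝ) * x ^ (n-1))) = (1/2) * PP x / (1 - x) := by
    have h1 : (1 - x) * (∑' n, cc n * ((n:ℝ) * x ^ (n-1))) = (1/2) * PP x := by
      rw [sub_mul, one_mul, hxD, hDval, hsum]
      ring
    field_simp [ne_of_gt h1x] at h1 ⊢
    linarith
  rwa [hfinal] at key

lemma PP_zero : PP 0 = 1 := by
  rw [PP, tsum_eq_single 0 (fun n hn => by simp [zero_pow hn])]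
  simp [cc_zero]

lemma PP_eq {x : ℝ} (hx0 : 0 ≤ x) (hx1 : x < 1) : PP x = 1 / Real.sqrt (1 - x) := by
  set r : ℝ := (1 + x) / 2 with hrdef
  have hr : 0 < r := by simp [hrdef]; linarith
  have hr1 : r < 1 := by simp [hrdef]; linarith
  have hxr : x < r := by simp [hrdef]; linarith
  set h : ℝ → ℝ := fun y => Real.sqrt (1 - y) * PP y with hdef
  have hderiv : ∀ y ∈ Set.Icc (0:ℝ) x, HasDerivAt h 0 y := by
    intro y hy
    have hy0 : 0 ≤ y := hy.1
    have hyx : y ≤ x := hy.2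
    have hyr : |y| < r := by rw [abs_of_nonneg hy0]; linarith
    have h1y : (0:ℝ) < 1 - y := by linarith [hyx.trans_lt hx1]
    have hs : (0:ℝ) < Real.sqrt (1 - y) := Real.sqrt_pos.2 h1y
    have d1 : HasDerivAt (fun z : ℝ => Real.sqrt (1 - z))
        (1 / (2 * Real.sqrt (1 - y)) * (-1)) y := by
      have inner : HasDerivAt (fun z : ℝ => 1 - z) (-1) y := by
        simpa using (hasDerivAt_id y).const_sub 1
      exact (Real.hasDerivAt_sqrt (ne_of_gt h1y)).comp y inner
    have d2 := hasDerivAt_PP hr hr1 hyr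
    have := d1.mul d2
    refine this.congr_deriv ?_; symm
    have hss : Real.sqrt (1 - y) * Real.sqrt (1 - y) = 1 - y :=
      Real.mul_self_sqrt h1y.le
    have hne : Real.sqrt (1 - y) ≠ 0 := ne_of_gt hs
    field_simp
    rw [Real.sq_sqrt h1y.le]; ring
  have hcont : ContinuousOn h (Set.Icc 0 x) :=
    fun y hy => ((hderiv y hy).continuousAt).continuousWithinAt
  have := constant_of_has_deriv_right_zero hcont
    (fun y hy => ((hderiv y (Set.mem_Icc_of_Ico hy)).hasDerivWithinAt)) x
    (Set.right_mem_Icc.2 hx0)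
  have hx' : Real.sqrt (1 - x) * PP x = 1 := by
    have h0 : h 0 = 1 := by simp [hdef, PP_zero]
    have : h x = h 0 := this
    rw [h0] at this
    simpa [hdef] using this
  have hs : (0:ℝ) < Real.sqrt (1 - x) := Real.sqrt_pos.2 (by linarith)
  field_simp at hx' ⊢
  linarith

lemma summable_A {b : ℝ} (hb : 0 < b) : Summable (fun n : ℕ => cc n / (b + n)) := by
  have hm : 0 < min b 1 := lt_min hb one_pos
  have key : Summable (fun n : ℕ => 1/((n:ℝ)+1)^(3/2:ℝ)) := by
    have h1 : Summable (fun n : ℕ => 1/(n:ℝ)^(3/2:ℝ)) :=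
      Real.summable_one_div_nat_rpow.2 (by norm_num)
    have := (summable_nat_add_iff 1).2 h1
    apply this.congr
    intro n; push_cast; ring_nf
  apply Summable.of_nonneg_of_le (fun n => div_nonneg (cc_pos n).le (by positivity))
    (fun n => ?_) (key.mul_left (1 / min b 1))
  have hbn : (0:ℝ) < b + n := by positivity
  have hmn : min b 1 * ((n:ℝ)+1) ≤ b + n := by
    rcases le_total b 1 with h | h
    · rw [min_eq_left h]
      have : b * ((n:ℝ)+1) = b + b*n := by ring
      rw [this]
      have : b * (n:ℝ) ≤ 1 * n := by
        apply mul_le_mul_of_nonneg_right h (by positivity)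
      linarith
    · rw [min_eq_right h]
      have : (1:ℝ) * ((n:ℝ)+1) = n + 1 := by ring
      rw [this]; linarith
  have hrpow : ((n:ℝ)+1)^(3/2:ℝ) = ((n:ℝ)+1) * Real.sqrt ((n:ℝ)+1) := by
    rw [show (3/2:ℝ) = 1 + 1/2 by norm_num, Real.rpow_add (by positivity), Real.rpow_one,
      ← Real.sqrt_eq_rpow]
  calc cc n / (b + n) ≤ (1 / Real.sqrt ((n:ℝ)+1)) / (min b 1 * ((n:ℝ)+1)) := by
        apply div_le_div₀ (by positivity) (cc_le n) (by positivity) hmn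
    _ = 1 / min b 1 * (1/((n:ℝ)+1)^(3/2:ℝ)) := by
        rw [hrpow]; field_simp

lemma integrable_F {b : ℝ} (hb : 0 < b) (n : ℕ) :
    IntegrableOn (fun t : ℝ => cc n * t ^ (b - 1 + (n:ℝ))) (Set.Ioo 0 1) := by
  apply Integrable.const_mul
  have h := (intervalIntegral.intervalIntegrable_rpow' (a := 0) (b := 1) (r := b - 1 + (n:ℝ))
    (by linarith [Nat.cast_nonneg (α := ℝ) n])).1
  exact (h.mono_set Set.Ioo_subset_Ioc_self)

lemma val_F {b : ℝ} (hb : 0 < b) (n : ℕ) :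
    ∫ t in Set.Ioo (0:ℝ) 1, cc n * t ^ (b - 1 + (n:ℝ)) = cc n / (b + n) := by
  rw [integral_const_mul, ← integral_Ioc_eq_integral_Ioo,
    ← intervalIntegral.integral_of_le zero_le_one,
    integral_rpow (Or.inl (by linarith [Nat.cast_nonneg (α := ℝ) n]))]
  have hbn : b - 1 + (n:ℝ) + 1 = b + n := by ring
  rw [hbn, Real.one_rpow, Real.zero_rpow (by positivity)]
  ring

lemma sum_eq_integral {b : ℝ} (hb : 0 < b) :
    ∑' n : ℕ, cc n / (b + n)
      = ∫ t in Set.Ioo (0:ℝ) 1, t ^ (b-1) * (1 / Real.sqrt (1 - t)) := by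
  have hint := hasSum_integral_of_summable_integral_norm
    (μ := volume.restrict (Set.Ioo (0:ℝ) 1))
    (F := fun (n : ℕ) (t : ℝ) => cc n * t ^ (b - 1 + (n:ℝ)))
    (fun n => integrable_F hb n) ?_
  · have h1 : ∀ n : ℕ, ∫ t in Set.Ioo (0:ℝ) 1, cc n * t ^ (b - 1 + (n:ℝ)) = cc n / (b+n) :=
      val_F hb
    have h2 : (∫ t in Set.Ioo (0:ℝ) 1, ∑' n : ℕ, cc n * t ^ (b - 1 + (n:ℝ)))
        = ∫ t in Set.Ioo (0:ℝ) 1, t ^ (b-1) * (1 / Real.sqrt (1 - t)) := by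
      apply setIntegral_congr_fun measurableSet_Ioo
      intro t ht
      dsimp only
      have ht0 : 0 < t := ht.1
      have ht1 : t < 1 := ht.2
      have habs : |t| < 1 := by rw [abs_of_pos ht0]; exact ht1
      have hsum : HasSum (fun n : ℕ => t ^ (b-1) * (cc n * t ^ n))
          (t ^ (b-1) * PP t) := ((summable_P habs).hasSum).mul_left _
      have hcongr : ∀ n : ℕ, t ^ (b-1) * (cc n * t ^ n) = cc n * t ^ (b - 1 + (n:ℝ)) := by
        intro n
        rw [Real.rpow_add ht0, Real.rpow_natCast]
        ring
      have e1 : ∑' n : ℕ, cc n * t ^ (b - 1 + (n:ℝ))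
          = ∑' n : ℕ, t ^ (b-1) * (cc n * t ^ n) := tsum_congr (fun n => (hcongr n).symm)
      rw [e1, hsum.tsum_eq, PP_eq ht0.le ht1]
    rw [← h2]
    calc ∑' n : ℕ, cc n / (b + n)
        = ∑' n : ℕ, ∫ t in Set.Ioo (0:ℝ) 1, cc n * t ^ (b - 1 + (n:ℝ)) :=
          tsum_congr (fun n => (h1 n).symm)
      _ = _ := hint.tsum_eq
  · apply (summable_A hb).congr
    intro n
    rw [← val_F hb n]
    apply setIntegral_congr_fun measurableSet_Ioo
    intro t ht
    dsimp only
    exact (Real.norm_of_nonneg (mul_nonneg (cc_pos n).le (Real.rpow_nonneg ht.1.le _))).symm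

lemma beta_eval {b : ℝ} (hb : 0 < b) :
    ∫ t in Set.Ioo (0:ℝ) 1, t ^ (b-1) * (1 / Real.sqrt (1 - t))
      = Real.sqrt π * Real.Gamma b / Real.Gamma (b + 1/2) := by
  set J : ℝ := ∫ t in Set.Ioo (0:ℝ) 1, t ^ (b-1) * (1 / Real.sqrt (1 - t)) with hJ
  have hbeta : Complex.betaIntegral (b:ℂ) (1/2 : ℂ) = (J : ℂ) := by
    rw [Complex.betaIntegral, intervalIntegral.integral_of_le zero_le_one,
      integral_Ioc_eq_integral_Ioo, hJ]
    calc ∫ t in Set.Ioo (0:ℝ) 1, (t:ℂ) ^ ((b:ℂ) - 1) * (1 - (t:ℂ)) ^ ((1/2 : ℂ) - 1)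
        = ∫ t in Set.Ioo (0:ℝ) 1, ((t ^ (b-1) * (1 / Real.sqrt (1-t)) : ℝ) : ℂ) := ?_
      _ = ((∫ t in Set.Ioo (0:ℝ) 1, t ^ (b-1) * (1 / Real.sqrt (1-t)) : ℝ) : ℂ) :=
          _root_.integral_ofReal
    apply setIntegral_congr_fun measurableSet_Ioo
    intro t ht
    have ht0 : (0:ℝ) < t := ht.1
    have ht1 : t < 1 := ht.2
    have h1t : (0:ℝ) < 1 - t := by linarith
    dsimp only
    rw [show ((b:ℂ) - 1) = ((b - 1 : ℝ) : ℂ) by push_cast; ring,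
      show ((1/2 : ℂ) - 1) = ((-(1/2) : ℝ) : ℂ) by norm_num,
      show (1 - (t:ℂ)) = ((1 - t : ℝ) : ℂ) by push_cast; ring,
      ← Complex.ofReal_cpow ht0.le, ← Complex.ofReal_cpow h1t.le,
      ← Complex.ofReal_mul]
    norm_cast
    rw [Real.rpow_neg h1t.le, ← Real.sqrt_eq_rpow, one_div]
  have hG := Complex.Gamma_mul_Gamma_eq_betaIntegral (s := (b:ℂ)) (t := (1/2 : ℂ))
    (by simpa using hb) (by norm_num)
  rw [hbeta] at hG
  rw [show (1/2 : ℂ) = ((1/2 : ℝ) : ℂ) by norm_num,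
    show ((b:ℂ) + ((1/2:ℝ):ℂ)) = (((b + 1/2 : ℝ)) : ℂ) by push_cast; ring,
    Complex.Gamma_ofReal, Complex.Gamma_ofReal, Complex.Gamma_ofReal] at hG
  have hreal : Real.Gamma b * Real.Gamma (1/2) = Real.Gamma (b + 1/2) * J := by
    exact_mod_cast hG
  have hpos : 0 < Real.Gamma (b + 1/2) := Real.Gamma_pos_of_pos (by linarith)
  rw [Real.Gamma_one_half_eq] at hreal
  rw [eq_div_iff hpos.ne']
  linear_combination -hreal


lemma sumA {b : ℝ} (hb : 0 < b) :
    ∑' n : ℕ, cc n / (b + n) = Real.sqrt π * Real.Gamma b / Real.Gamma (b + 1/2) := by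
  rw [sum_eq_integral hb, beta_eval hb]

lemma min_mul_le {a : ℝ} (ha : 0 < a) (n : ℕ) : min a 1 * ((n:ℝ)+1) ≤ a + n := by
  rcases le_total a 1 with h | h
  · rw [min_eq_left h]
    have h2 : a * (n:ℝ) ≤ 1 * n := mul_le_mul_of_nonneg_right h (by positivity)
    nlinarith
  · rw [min_eq_right h]; push_cast; nlinarith

lemma summable_sq {b : ℝ} (hb : 0 < b) : Summable (fun n : ℕ => cc n / (b + n)^2) := by
  have hm : 0 < min b 1 := lt_min hb one_pos
  have key : Summable (fun n : ℕ => 1/((n:ℝ)+1)^2) := by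
    have h1 : Summable (fun n : ℕ => 1/(n:ℝ)^2) :=
      Real.summable_one_div_nat_pow.2 (by norm_num)
    have := (summable_nat_add_iff 1).2 h1
    apply this.congr; intro n; push_cast; ring_nf
  apply Summable.of_nonneg_of_le (fun n => div_nonneg (cc_pos n).le (by positivity))
    (fun n => ?_) (key.mul_left ((1/min b 1)^2))
  have hbn : (0:ℝ) < b + n := by positivity
  have h2 := min_mul_le hb n
  calc cc n / (b+n)^2 ≤ 1 / (min b 1 * ((n:ℝ)+1))^2 := by
        apply div_le_div₀ (by norm_num) (cc_le_one n) (by positivity)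
        exact pow_le_pow_left₀ (by positivity) h2 2
    _ = (1/min b 1)^2 * (1/((n:ℝ)+1)^2) := by field_simp

lemma hasDerivAt_g {b : ℝ} (hb : 0 < b) :
    HasDerivAt (fun x => ∑' n : ℕ, cc n / (x + n))
      (-(∑' n : ℕ, cc n / (b + n)^2)) b := by
  have hm : 0 < min (b/2) 1 := lt_min (by linarith) one_pos
  have key : HasDerivAt (fun x => ∑' n : ℕ, cc n / (x + n))
      (∑' n : ℕ, cc n * (-(((b + (n:ℝ))^2)⁻¹) * 1)) b := by
    apply hasDerivAt_tsum_of_isPreconnected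
      (u := fun n : ℕ => (1/min (b/2) 1)^2 * (1/((n:ℝ)+1)^2))
      (g' := fun (n : ℕ) (x : ℝ) => cc n * (-(((x + (n:ℝ))^2)⁻¹) * 1))
      (t := Set.Ioi (b/2)) (y₀ := b)
    · apply Summable.mul_left
      have h1 : Summable (fun n : ℕ => 1/(n:ℝ)^2) :=
        Real.summable_one_div_nat_pow.2 (by norm_num)
      have := (summable_nat_add_iff 1).2 h1
      apply this.congr; intro n; push_cast; ring_nf
    · exact isOpen_Ioi
    · exact isPreconnected_Ioi
    · intro n x hx
      have hx0 : (0:ℝ) < x := lt_trans (by linarith) (Set.mem_Ioi.1 hx)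
      have hxn : x + (n:ℝ) ≠ 0 := (add_pos_of_pos_of_nonneg hx0 (Nat.cast_nonneg n)).ne'
      have h := ((hasDerivAt_inv hxn).comp x ((hasDerivAt_id x).add_const (n:ℝ))).const_mul (cc n)
      exact h.congr_of_eventuallyEq (Filter.Eventually.of_forall fun z => by simp [div_eq_mul_inv])
    · intro n x hx
      have hx' : b/2 < x := hx
      have hx0 : (0:ℝ) < x := lt_trans (by linarith) hx'
      have hxn : (0:ℝ) < x + n := add_pos_of_pos_of_nonneg hx0 (Nat.cast_nonneg n)
      have h2 : min (b/2) 1 * ((n:ℝ)+1) ≤ x + n := by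
        have := min_mul_le (show (0:ℝ) < b/2 by linarith) n
        linarith
      rw [Real.norm_eq_abs, abs_mul, abs_of_pos (cc_pos n), abs_mul, abs_one, mul_one,
        abs_neg, abs_inv, abs_pow, abs_of_pos hxn]
      calc cc n * ((x+(n:ℝ))^2)⁻¹ ≤ 1 * ((min (b/2) 1 * ((n:ℝ)+1))^2)⁻¹ := by
            apply mul_le_mul (cc_le_one n) _ (by positivity) one_pos.le
            apply inv_anti₀ (by positivity)
            exact pow_le_pow_left₀ (by positivity) h2 2
        _ = (1/min (b/2) 1)^2 * (1/((n:ℝ)+1)^2) := by field_simp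
    · exact Set.mem_Ioi.2 (by linarith)
    · exact summable_A hb
    · exact Set.mem_Ioi.2 (by linarith)
  convert key using 1
  rw [← tsum_neg]
  apply tsum_congr
  intro n
  rw [div_eq_mul_inv]
  ring

lemma Gamma_ne_neg {x : ℝ} (hx : 0 < x) : ∀ m : ℕ, x ≠ -m := by
  intro m
  have h0 : -(m:ℝ) ≤ 0 := neg_nonpos.2 (Nat.cast_nonneg m)
  intro h; rw [h] at hx; linarith

lemma sumB {b : ℝ} (hb : 0 < b) :
    ∑' n : ℕ, cc n / (b + n)^2
      = Real.sqrt π * (Real.Gamma b * deriv Real.Gamma (b + 1/2)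
          - deriv Real.Gamma b * Real.Gamma (b + 1/2)) / Real.Gamma (b + 1/2)^2 := by
  have hb2 : (0:ℝ) < b + 1/2 := by linarith
  have hΓpos : 0 < Real.Gamma (b + 1/2) := Real.Gamma_pos_of_pos hb2
  have d1 : HasDerivAt Real.Gamma (deriv Real.Gamma b) b :=
    (Real.differentiableAt_Gamma (Gamma_ne_neg hb)).hasDerivAt
  have d2 : HasDerivAt (fun x => Real.Gamma (x + 1/2)) (deriv Real.Gamma (b + 1/2)) b := by
    have outer : HasDerivAt Real.Gamma (deriv Real.Gamma (b + 1/2)) (b + 1/2) :=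
      (Real.differentiableAt_Gamma (Gamma_ne_neg hb2)).hasDerivAt
    have inner : HasDerivAt (fun x : ℝ => x + 1/2) 1 b := (hasDerivAt_id b).add_const _
    have h := outer.comp b inner; rwa [mul_one] at h
  have drhs : HasDerivAt (fun x => Real.sqrt π * Real.Gamma x / Real.Gamma (x + 1/2))
      ((Real.sqrt π * deriv Real.Gamma b * Real.Gamma (b + 1/2)
        - Real.sqrt π * Real.Gamma b * deriv Real.Gamma (b + 1/2))
          / Real.Gamma (b + 1/2)^2) b :=
    (d1.const_mul (Real.sqrt π)).div d2 hΓpos.ne'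
  have heq : (fun x => ∑' n : ℕ, cc n / (x + n))
      =ᶠ[nhds b] (fun x => Real.sqrt π * Real.Gamma x / Real.Gamma (x + 1/2)) := by
    filter_upwards [Ioi_mem_nhds hb] with x hx
    exact sumA (Set.mem_Ioi.1 hx)
  have dg := hasDerivAt_g hb
  have dg' : HasDerivAt (fun x => Real.sqrt π * Real.Gamma x / Real.Gamma (x + 1/2))
      (-(∑' n : ℕ, cc n / (b + n)^2)) b := dg.congr_of_eventuallyEq heq.symm
  have := drhs.unique dg'
  rw [← neg_eq_iff_eq_neg] at this
  rw [← this]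
  field_simp
  ring


theorem stmt5 (b : ℝ) (hb : 0 < b) :
    ∑' n : ℕ, (poch (1/2) n / n.factorial) * (1 / (1 + n / b) ^ 2) =
      Real.sqrt π * b ^ 2 * Real.Gamma b * (digamma (b + 1/2) - digamma b) /
        Real.Gamma (b + 1/2) := by
  show ∑' n : ℕ, cc n * (1 / (1 + n / b) ^ 2) = _
  have hterm : ∀ n : ℕ, cc n * (1 / (1 + n / b) ^ 2) = b^2 * (cc n / (b + n)^2) := by
    intro n
    have hbn : (0:ℝ) < b + n := add_pos_of_pos_of_nonneg hb (Nat.cast_nonneg n)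
    have h1 : 1 + (n:ℝ)/b = (b + n)/b := by field_simp
    rw [h1, div_pow, one_div_div]
    field_simp
  rw [tsum_congr hterm, tsum_mul_left, sumB hb]
  have hΓb : 0 < Real.Gamma b := Real.Gamma_pos_of_pos hb
  have hΓb2 : 0 < Real.Gamma (b + 1/2) := Real.Gamma_pos_of_pos (by linarith)
  rw [digamma, digamma]
  field_simp
end

section
/- The series ∑_{n=0}^∞ ((1/2)_n / n!)^2 · 1/(n+1) equals 4/π. -/
open Real BigOperators Filter Finset Topology

noncomputable def aa (n : ℕ) : ℝ := ∏ i ∈ Finset.range n, ((2 * i + 1) / (2 * i + 2) : ℝ)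

lemma aa_pos (n : ℕ) : 0 < aa n := by
  apply Finset.prod_pos
  intro i _
  positivity

lemma poch_eq (n : ℕ) : poch (1/2) n / n.factorial = aa n := by
  unfold poch aa
  have hf : ((n.factorial : ℝ)) = ∏ i ∈ Finset.range n, ((i : ℝ) + 1) := by
    rw [← Finset.prod_range_add_one_eq_factorial]
    push_cast [Nat.cast_prod]
    rfl
  rw [hf, ← Finset.prod_div_distrib]
  apply Finset.prod_congr rfl
  intro i _
  have : (i : ℝ) + 1 ≠ 0 := by positivity
  field_simp
  ring

lemma partial_sum (N : ℕ) :
    ∑ n ∈ Finset.range N, (aa n) ^ 2 * (1 / ((n : ℝ) + 1)) = 4 * N * (aa N) ^ 2 := by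
  induction N with
  | zero => simp
  | succ N ih =>
    rw [Finset.sum_range_succ, ih]
    have hstep : aa (N + 1) = aa N * ((2 * N + 1) / (2 * N + 2)) := Finset.prod_range_succ _ _
    rw [hstep]
    have h1 : (N : ℝ) + 1 ≠ 0 := by positivity
    have h2 : 2 * (N : ℝ) + 2 ≠ 0 := by positivity
    push_cast
    field_simp
    ring

lemma telescope (k : ℕ) : ∏ i ∈ Finset.range k, ((2 * i + 1) / (2 * i + 3) : ℝ) = 1 / (2 * k + 1) := by
  induction k with
  | zero => simp
  | succ k ih =>
    rw [Finset.prod_range_succ, ih]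
    have h1 : 2 * (k : ℝ) + 1 ≠ 0 := by positivity
    have h3 : 2 * (k : ℝ) + 3 ≠ 0 := by positivity
    push_cast
    field_simp
    ring

lemma tendsto_key : Tendsto (fun k : ℕ => (2 * (k : ℝ) + 1) * (aa k) ^ 2) atTop (𝓝 (2 / π)) := by
  have hW := Real.tendsto_prod_pi_div_two
  have hWe : ∀ k : ℕ, (∏ i ∈ Finset.range k,
      ((2 : ℝ) * i + 2) / (2 * i + 1) * ((2 * i + 2) / (2 * i + 3)))
      = 1 / ((2 * k + 1) * (aa k) ^ 2) := by
    intro k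
    have h : (aa k) ^ 2 * (∏ i ∈ Finset.range k,
        ((2 : ℝ) * i + 2) / (2 * i + 1) * ((2 * i + 2) / (2 * i + 3))) = 1 / (2 * k + 1) := by
      unfold aa
      rw [sq, ← Finset.prod_mul_distrib, ← Finset.prod_mul_distrib, ← telescope k]
      refine Finset.prod_congr rfl (fun i _ => ?_)
      have h1 : 2 * (i : ℝ) + 1 ≠ 0 := by positivity
      have h2 : 2 * (i : ℝ) + 2 ≠ 0 := by positivity
      have h3 : 2 * (i : ℝ) + 3 ≠ 0 := by positivity
      field_simp
    have hne : (aa k) ^ 2 ≠ 0 := by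
      have := aa_pos k; positivity
    have hk1 : 2 * (k : ℝ) + 1 ≠ 0 := by positivity
    field_simp at h ⊢
    rw [eq_div_iff hne]; linarith [h]
  rw [show (fun k : ℕ => ∏ i ∈ Finset.range k,
      ((2 : ℝ) * i + 2) / (2 * i + 1) * ((2 * i + 2) / (2 * i + 3)))
      = fun k : ℕ => 1 / ((2 * k + 1) * (aa k) ^ 2) from funext hWe] at hW
  have hπ : (π / 2 : ℝ) ≠ 0 := by positivity
  have := hW.inv₀ hπ
  simp only [one_div, inv_inv] at this
  convert this using 2
  rw [inv_div]

theorem stmt8 :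
    ∑' n : ℕ, (poch (1/2) n / n.factorial) ^ 2 * (1 / ((n : ℝ) + 1)) = 4 / π := by
  have hrw : (fun n : ℕ => (poch (1/2) n / n.factorial) ^ 2 * (1 / ((n : ℝ) + 1)))
      = fun n : ℕ => (aa n) ^ 2 * (1 / ((n : ℝ) + 1)) := by
    funext n; rw [poch_eq]
  rw [hrw]
  have hnonneg : ∀ n : ℕ, 0 ≤ (aa n) ^ 2 * (1 / ((n : ℝ) + 1)) := by
    intro n; positivity
  have hsq0 : Tendsto (fun k : ℕ => (aa k) ^ 2) atTop (𝓝 0) := by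
    have hinv : Tendsto (fun k : ℕ => (2 * (k : ℝ) + 1)⁻¹) atTop (𝓝 0) := by
      apply Tendsto.inv_tendsto_atTop
      apply Filter.tendsto_atTop_add_const_right
      exact (tendsto_natCast_atTop_atTop).const_mul_atTop (by norm_num)
    have := tendsto_key.mul hinv
    rw [mul_zero] at this
    refine this.congr (fun k => ?_)
    have : 2 * (k : ℝ) + 1 ≠ 0 := by positivity
    field_simp
  have hlim : Tendsto (fun N : ℕ => 4 * (N : ℝ) * (aa N) ^ 2) atTop (𝓝 (4 / π)) := by
    have h1 : Tendsto (fun k : ℕ => 2 * ((2 * (k : ℝ) + 1) * (aa k) ^ 2) - 2 * (aa k) ^ 2)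
        atTop (𝓝 (2 * (2 / π) - 2 * 0)) :=
      (tendsto_key.const_mul 2).sub (hsq0.const_mul 2)
    have : 2 * (2 / π) - 2 * (0:ℝ) = 4 / π := by ring
    rw [this] at h1
    refine h1.congr (fun k => by ring)
  have hsum : HasSum (fun n : ℕ => (aa n) ^ 2 * (1 / ((n : ℝ) + 1))) (4 / π) := by
    rw [hasSum_iff_tendsto_nat_of_nonneg hnonneg]
    refine hlim.congr (fun N => ?_)
    rw [partial_sum]
  exact hsum.tsum_eq
end
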